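/- Let n ≥ 10^6, let B ~ Bin(n, 1/2), and let U be the smallest integer c such that Pr[B > c] ≤ 1/(3·e²·n·√6). Then Pr[B = U] ≤ (8/(3·e·√6)) · √(ln n) / n^{3/2}. -/

import Mathlib

/-- The probability mass function of the binomial distribution `Bin(n, p)`:
`Pr[B = k] = C(n,k) p^k (1-p)^(n-k)`. -/
noncomputable def binomPMF (n : ℕ) (p : ℝ) (k : ℕ) : ℝ :=
  (n.choose k : ℝ) * p ^ k * (1 - p) ^ (n - k)

/-- `Pr[B > c]` for `B ~ Bin(n, p)`. -/
noncomputable def prGT (n : ℕ) (p : ℝ) (c : ℕ) : ℝ :=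
  ∑ k ∈ Finset.Icc (c + 1) n, binomPMF n p k

/-- `L` : the smallest integer `c` such that `Pr[B > c] < 1/(n·√2)`
for `B ~ Bin(n, 1/2)`. -/
noncomputable def Lhalf (n : ℕ) : ℕ :=
  sInf {c : ℕ | prGT n (1 / 2) c < 1 / ((n : ℝ) * Real.sqrt 2)}

/-- `U` : the smallest integer `c` such that `Pr[B > c] ≤ 1/(3·e²·n·√6)`
for `B ~ Bin(n, 1/2)`. -/
noncomputable def Uhalf (n : ℕ) : ℕ :=
  sInf {c : ℕ | prGT n (1 / 2) c ≤ 1 / (3 * Real.exp 1 ^ 2 * (n : ℝ) * Real.sqrt 6)}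

lemma pmf_eq {n k : ℕ} (hk : k ≤ n) :
    binomPMF n (1/2) k = (n.choose k : ℝ) / 2 ^ n := by
  unfold binomPMF
  have h2 : (1 : ℝ) - 1/2 = 1/2 := by norm_num
  rw [h2, mul_assoc, ← pow_add, Nat.add_sub_cancel' hk, div_pow, one_pow]
  ring

lemma pmf_nonneg (n : ℕ) (k : ℕ) : 0 ≤ binomPMF n (1/2) k := by
  unfold binomPMF
  positivity

lemma prGT_anti {n : ℕ} {c c' : ℕ} (h : c ≤ c') : prGT n (1/2) c' ≤ prGT n (1/2) c := by
  apply Finset.sum_le_sum_of_subset_of_nonneg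
  · exact Finset.Icc_subset_Icc_left (by omega)
  · intro i _ _; exact pmf_nonneg n i

lemma choose_rec (n k : ℕ) (hk : k ≤ n) :
    (n.choose (k+1) : ℝ) * (k+1) = (n.choose k : ℝ) * ((n : ℝ) - k) := by
  have h := Nat.choose_succ_right_eq n k
  have hcast : ((n - k : ℕ) : ℝ) = (n : ℝ) - k := by rw [Nat.cast_sub hk]
  calc (n.choose (k+1) : ℝ) * (k+1) = ((n.choose (k+1) * (k+1) : ℕ) : ℝ) := by push_cast; ring
    _ = ((n.choose k * (n - k) : ℕ) : ℝ) := by rw [h]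
    _ = (n.choose k : ℝ) * ((n : ℝ) - k) := by rw [Nat.cast_mul, hcast]

lemma choose_anti (n a : ℕ) (ha : n ≤ 2*a + 1) (d : ℕ) :
    n.choose (a + d) ≤ n.choose a := by
  induction d with
  | zero => simp
  | succ d ih =>
    have step : n.choose (a + d + 1) ≤ n.choose (a + d) := by
      have h1 := Nat.choose_succ_right_eq n (a + d)
      have h2 : n - (a + d) ≤ a + d + 1 := by omega
      have h3 : n.choose (a+d+1) * (a+d+1) ≤ n.choose (a+d) * (a+d+1) := by
        rw [h1]; exact Nat.mul_le_mul_left _ h2 |>.trans_eq (by ring)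
      exact Nat.le_of_mul_le_mul_right h3 (by omega)
    calc n.choose (a + (d+1)) = n.choose (a + d + 1) := by ring_nf
      _ ≤ n.choose (a + d) := step
      _ ≤ n.choose a := ih

set_option maxHeartbeats 4000000 in
theorem stmt_15 (n : ℕ) (hn : 10 ^ 6 ≤ n) :
    binomPMF n (1 / 2) (Uhalf n)
      ≤ (8 / (3 * Real.exp 1 * Real.sqrt 6))
          * Real.sqrt (Real.log n) / (n : ℝ) ^ ((3 : ℝ) / 2) := by
  have hn1 : 1 ≤ n := by omega
  have hNpos : (0:ℝ) < (n:ℝ) := by positivity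
  have hN6 : (10:ℝ)^6 ≤ (n:ℝ) := by exact_mod_cast hn
  -- log bounds
  set L := Real.log (n:ℝ) with hLdef
  have hLlb : 12.4 ≤ L := by
    have h1 : Real.log ((2:ℝ)^18) ≤ L := by
      apply Real.log_le_log (by positivity)
      nlinarith only [hN6]
    rw [Real.log_pow] at h1
    have := Real.log_two_gt_d9
    push_cast at h1
    nlinarith only [h1, Real.log_two_gt_d9]
  have hLub : L ≤ 14e-6 * (n:ℝ) := by
    have he : Real.exp 1 ≤ (10:ℝ)^6 := by
      have h9 := Real.exp_one_lt_d9; nlinarith only [h9]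
    have h1 : L / (n:ℝ) ≤ Real.log ((10:ℝ)^6) / (10:ℝ)^6 := by
      have := Real.log_div_self_antitoneOn
        (show (10:ℝ)^6 ∈ {x : ℝ | Real.exp 1 ≤ x} from he)
        (show (n:ℝ) ∈ {x : ℝ | Real.exp 1 ≤ x} from he.trans hN6) hN6
      simpa using this
    have h2 : Real.log ((10:ℝ)^6) ≤ 14 := by
      have h10 : Real.log 10 ≤ 2.33 := by
        have h8 : (10:ℝ) = 2^3 * 1.25 := by norm_num
        rw [h8, Real.log_mul (by norm_num) (by norm_num), Real.log_pow]
        have hl2 := Real.log_two_lt_d9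
        have hl125 : Real.log 1.25 ≤ 0.25 := by
          have := Real.log_le_sub_one_of_pos (x := (1.25:ℝ)) (by norm_num)
          linarith
        push_cast
        nlinarith only [hl2, hl125]
      rw [Real.log_pow]
      push_cast
      nlinarith only [h10]
    calc L = (L / (n:ℝ)) * n := by field_simp
      _ ≤ (14 / (10:ℝ)^6) * n := by
          apply mul_le_mul_of_nonneg_right _ hNpos.le
          calc L / (n:ℝ) ≤ Real.log ((10:ℝ)^6) / (10:ℝ)^6 := h1
            _ ≤ 14 / (10:ℝ)^6 := by apply div_le_div_of_nonneg_right h2 (by norm_num) |>.trans_eq rfl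
      _ = 14e-6 * n := by norm_num
  have hLpos : (0:ℝ) < L := by linarith only [hLlb]
  -- square roots
  set sqN := Real.sqrt (n:ℝ) with hsqNdef
  have hsqNsq : sqN^2 = (n:ℝ) := Real.sq_sqrt hNpos.le
  have hsqNnn : 0 ≤ sqN := Real.sqrt_nonneg _
  have hsqNlb : 1000 ≤ sqN := by
    nlinarith only [hsqNsq, hsqNnn, hN6]
  set sqL := Real.sqrt L with hsqLdef
  have hsqLsq : sqL^2 = L := Real.sq_sqrt hLpos.le
  have hsqLnn : 0 ≤ sqL := Real.sqrt_nonneg _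
  have hsqLlb : 3.5 ≤ sqL := by nlinarith only [hsqLsq, hsqLnn, hLlb]
  set S := Real.sqrt ((2*L+6)*((n:ℝ)+1)) with hSdef
  have hSsq : S^2 = (2*L+6)*((n:ℝ)+1) := Real.sq_sqrt (by nlinarith only [hLlb, hNpos])
  have hSnn : 0 ≤ S := Real.sqrt_nonneg _
  set B := sqN / (8*sqL) with hBdef
  have hsqLpos : (0:ℝ) < sqL := by linarith only [hsqLlb]
  have hBpos : 0 < B := by
    apply div_pos (by linarith only [hsqNlb]) (by linarith only [hsqLlb])
  have hBsq : B^2 = (n:ℝ)/(64*L) := by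
    rw [hBdef, div_pow, mul_pow, hsqNsq, hsqLsq]; norm_num
  -- numeric bounds
  have hS2 : S^2 ≤ (0.006*(n:ℝ))^2 := by
    rw [hSsq]; nlinarith only [hLub, hN6, hNpos.le, hLlb]
  have hSle : S ≤ 0.006*(n:ℝ) := by
    nlinarith only [hS2, hSnn, hNpos.le, hN6]
  have hBle : B ≤ 0.0000358*(n:ℝ) := by
    have h1 : B ≤ sqN / 28 := by
      apply div_le_div_of_nonneg_left hsqNnn (by linarith only [hsqLlb]) (by nlinarith only [hsqLlb])
    have h2 : sqN ≤ (n:ℝ)/1000 := by nlinarith only [hsqNsq, hsqNlb]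
    linarith only [h1, h2, hN6]
  have hBSle : B*S ≤ 0.1971*(n:ℝ) := by
    have hBSnn : 0 ≤ B*S := mul_nonneg hBpos.le hSnn
    have hBSsq : (B*S)^2 ≤ (0.1971*(n:ℝ))^2 := by
      have : (B*S)^2 = ((n:ℝ)/(64*L)) * ((2*L+6)*((n:ℝ)+1)) := by
        rw [mul_pow, hBsq, hSsq]
      rw [this]
      rw [div_mul_eq_mul_div, div_le_iff₀ (by nlinarith only [hLlb])]
      nlinarith only [hLlb, hLub, hN6, hNpos.le]
    nlinarith only [hBSnn, hBSsq, hNpos.le]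
  -- natural parameters
  set s : ℕ := ⌈S⌉₊ with hsdef
  set m : ℕ := ⌈B⌉₊ with hmdef
  have hslb : S ≤ (s:ℝ) := Nat.le_ceil S
  have hsub : (s:ℝ) ≤ S + 1 := (Nat.ceil_lt_add_one hSnn).le
  have hmlb : B ≤ (m:ℝ) := Nat.le_ceil B
  have hmub : (m:ℝ) ≤ B + 1 := (Nat.ceil_lt_add_one hBpos.le).le
  have hm1 : 1 ≤ m := Nat.ceil_pos.mpr hBpos
  set q : ℝ := (s:ℝ) + (m:ℝ) with hqdef
  have hqnn : 0 ≤ q := by positivity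
  have hqle : q ≤ 0.0062*(n:ℝ) := by
    have h2n : (2:ℝ) ≤ 2e-6 * (n:ℝ) := by nlinarith only [hN6]
    rw [hqdef]; linarith only [h2n, hsub, hmub, hSle, hBle]
  have h4smn : 4*(s+m) ≤ n := by
    have hr : ((4*(s+m) : ℕ) : ℝ) ≤ (n:ℝ) := by
      push_cast
      nlinarith only [hqle, hN6]
    exact_mod_cast hr
  set h : ℕ := n/2 with hhdef
  have hhn : 2*h ≤ n ∧ n ≤ 2*h + 1 := by omega
  set C : ℕ := h + s with hCdef
  have hCm : C + m ≤ n := by omega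
  have hhrub : (h:ℝ) ≤ (n:ℝ)/2 := by
    have := hhn.1; push_cast [← @Nat.cast_le ℝ] at this ⊢; linarith
  have hhrlb : (n:ℝ)/2 - 1/2 ≤ (h:ℝ) := by
    have := hhn.2; push_cast [← @Nat.cast_le ℝ] at this ⊢; linarith
  -- the threshold t and the defining set
  set t : ℝ := 1 / (3 * Real.exp 1 ^ 2 * (n : ℝ) * Real.sqrt 6) with htdef
  have hsq6sq : Real.sqrt 6 ^ 2 = 6 := Real.sq_sqrt (by norm_num)
  have hsq6nn : 0 ≤ Real.sqrt 6 := Real.sqrt_nonneg _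
  have hsq6lb : 2.4 ≤ Real.sqrt 6 := by nlinarith only [hsq6sq, hsq6nn]
  have hsq6ub : Real.sqrt 6 ≤ 2.5 := by nlinarith only [hsq6sq, hsq6nn]
  have hE1 : 2.71 ≤ Real.exp 1 := by have h9 := Real.exp_one_gt_d9; linarith only [h9]
  have hE2 : Real.exp 1 ≤ 2.72 := by have h9 := Real.exp_one_lt_d9; linarith only [h9]
  have htpos : 0 < t := by
    rw [htdef]
    apply div_pos one_pos
    positivity
  set T : Set ℕ := {c : ℕ | prGT n (1/2) c ≤ t} with hTdef
  have hUT : Uhalf n = sInf T := by rw [Uhalf, hTdef, htdef]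
  have hTne : T.Nonempty := by
    refine ⟨n, ?_⟩
    rw [hTdef]
    show prGT n (1/2) n ≤ t
    unfold prGT
    rw [Finset.Icc_eq_empty (by omega), Finset.sum_empty]
    exact htpos.le
  have hUmem : prGT n (1/2) (Uhalf n) ≤ t := by
    rw [hUT]
    exact Nat.sInf_mem hTne
  clear_value L sqN sqL S B s m q h C t T
  -- Claim B : (n+1)/2 ≤ Uhalf n
  have hUlb : (n+1)/2 ≤ Uhalf n := by
    set k0 : ℕ := (n+1)/2 with hk0def
    have hk0n : k0 ≤ n := by omega
    have hk01 : 1 ≤ k0 := by omega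
    have hchoosek0 : n.choose k0 = n.choose (n/2) := by
      rw [← Nat.choose_symm hk0n]
      congr 1
      omega
    have hmax : 2^n ≤ (n+1) * n.choose (n/2) := by
      calc 2^n = ∑ i ∈ Finset.range (n+1), n.choose i := (Nat.sum_range_choose n).symm
        _ ≤ (Finset.range (n+1)).card • n.choose (n/2) :=
            Finset.sum_le_card_nsmul _ _ _ (fun i _ => Nat.choose_le_middle i n)
        _ = (n+1) * n.choose (n/2) := by rw [Finset.card_range, smul_eq_mul]
    have hpmfk0 : 1/((n:ℝ)+1) ≤ binomPMF n (1/2) k0 := by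
      rw [pmf_eq hk0n, hchoosek0]
      rw [div_le_div_iff₀ (by positivity) (by positivity)]
      have hc : ((2:ℝ))^n ≤ ((n:ℝ)+1) * (n.choose (n/2) : ℝ) := by
        exact_mod_cast hmax
      linarith only [hc]
    have hsingle : binomPMF n (1/2) k0 ≤ prGT n (1/2) (k0 - 1) := by
      unfold prGT
      apply Finset.single_le_sum (fun i _ => pmf_nonneg n i)
      rw [Finset.mem_Icc]
      omega
    have htlt : t < 1/((n:ℝ)+1) := by
      have he2 : (7.3:ℝ) ≤ Real.exp 1^2 := by nlinarith only [hE1]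
      have hab : (52:ℝ) ≤ 3 * Real.exp 1^2 * Real.sqrt 6 := by nlinarith only [he2, hsq6lb, hE1]
      have h52 := mul_le_mul_of_nonneg_right hab hNpos.le
      rw [htdef, div_lt_div_iff₀ (by positivity) (by positivity)]
      nlinarith only [h52, hN6]
    by_contra hcon
    push_neg at hcon
    have hle : Uhalf n ≤ k0 - 1 := by omega
    have := (prGT_anti hle).trans hUmem |>.trans_lt htlt
    linarith only [hpmfk0, hsingle, this]
  -- Claim A : prGT n (1/2) C ≤ t, hence Uhalf n ≤ C
  have hCn : C + 1 ≤ n := by omega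
  have hs4 : (s:ℝ) ≤ (n:ℝ)/4 := by
    have hr : ((4*(s+m) : ℕ) : ℝ) ≤ (n:ℝ) := by exact_mod_cast h4smn
    push_cast at hr
    have hm0 : (0:ℝ) ≤ (m:ℝ) := by positivity
    linarith only [hr, hm0]
  have hA1 : ∀ j : ℕ, j ≤ s + 1 →
      (n.choose (h+j) : ℝ) ≤ (n.choose h : ℝ) * Real.exp (-((j:ℝ)*((j:ℝ)-1))/((n:ℝ)+1)) := by
    intro j
    induction j with
    | zero => intro _; simp
    | succ j ih =>
      intro hj
      push_cast
      have hjs : (j:ℝ) ≤ (s:ℝ) := by exact_mod_cast Nat.le_of_lt_succ (by omega)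
      have hkn : h + j ≤ n := by omega
      have hkr : (h:ℝ)+(j:ℝ) ≤ (n:ℝ) := by exact_mod_cast hkn
      have ihj := ih (by omega)
      have hrec := choose_rec n (h+j) hkn
      push_cast at hrec
      have hden : (0:ℝ) < ((h:ℝ)+(j:ℝ)+1) := by positivity
      have heq : (n.choose (h+(j+1)) : ℝ)
          = (n.choose (h+j) : ℝ) * (((n:ℝ) - ((h:ℝ)+(j:ℝ))) / ((h:ℝ)+(j:ℝ)+1)) := by
        rw [show h+(j+1) = (h+j)+1 by omega]
        rw [mul_div_assoc', eq_div_iff (ne_of_gt hden)]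
        linarith only [hrec]
      have hjP : (j:ℝ) ≤ ((n:ℝ)+1)/2 := by linarith only [hjs, hs4, hN6]
      have hnum : (n:ℝ) - ((h:ℝ)+(j:ℝ)) ≤ ((n:ℝ)+1)/2 - (j:ℝ) := by
        linarith only [hhrlb]
      have hden2 : ((n:ℝ)+1)/2 ≤ (h:ℝ)+(j:ℝ)+1 := by
        have hj0 : (0:ℝ) ≤ (j:ℝ) := by positivity
        linarith only [hhrlb, hj0]
      have hP2 : (0:ℝ) < ((n:ℝ)+1)/2 := by positivity
      have hratio : ((n:ℝ) - ((h:ℝ)+(j:ℝ)))/((h:ℝ)+(j:ℝ)+1)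
          ≤ Real.exp (-(2*(j:ℝ))/((n:ℝ)+1)) := by
        have h1 : ((n:ℝ) - ((h:ℝ)+(j:ℝ)))/((h:ℝ)+(j:ℝ)+1)
            ≤ (((n:ℝ)+1)/2 - (j:ℝ))/(((n:ℝ)+1)/2) :=
          div_le_div₀ (by linarith only [hjP]) hnum hP2 hden2
        have h2 : (((n:ℝ)+1)/2 - (j:ℝ))/(((n:ℝ)+1)/2) = (-(2*(j:ℝ))/((n:ℝ)+1)) + 1 := by
          field_simp
          ring
        have h3 := Real.add_one_le_exp (-(2*(j:ℝ))/((n:ℝ)+1))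
        rw [h2] at h1
        linarith only [h1, h3]
      have hnn : (0:ℝ) ≤ (n.choose h : ℝ) * Real.exp (-((j:ℝ)*((j:ℝ)-1))/((n:ℝ)+1)) := by
        positivity
      have hnn2 : (0:ℝ) ≤ ((n:ℝ) - ((h:ℝ)+(j:ℝ)))/((h:ℝ)+(j:ℝ)+1) :=
        div_nonneg (by linarith only [hkr]) hden.le
      calc (n.choose (h+(j+1)) : ℝ)
          = (n.choose (h+j) : ℝ) * (((n:ℝ) - ((h:ℝ)+(j:ℝ))) / ((h:ℝ)+(j:ℝ)+1)) := heq
        _ ≤ ((n.choose h : ℝ) * Real.exp (-((j:ℝ)*((j:ℝ)-1))/((n:ℝ)+1)))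
              * Real.exp (-(2*(j:ℝ))/((n:ℝ)+1)) := mul_le_mul ihj hratio hnn2 hnn
        _ = (n.choose h : ℝ) * Real.exp (-(((j:ℝ)+1)*(((j:ℝ)+1)-1))/((n:ℝ)+1)) := by
            rw [mul_assoc, ← Real.exp_add]
            congr 1
            field_simp
            ring
  have hchooseh : (n.choose h : ℝ) ≤ 2^n := by
    have hch : n.choose h ≤ 2^n := by
      calc n.choose h ≤ ∑ i ∈ Finset.range (n+1), n.choose i :=
            Finset.single_le_sum (f := fun i => n.choose i) (fun i _ => Nat.zero_le _)
              (Finset.mem_range.mpr (by omega))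
        _ = 2^n := Nat.sum_range_choose n
    exact_mod_cast hch
  have hApmf : binomPMF n (1/2) (C+1) ≤ Real.exp (-(2*L+6)) := by
    have hA2 : (n.choose (C+1) : ℝ) ≤ (n.choose h : ℝ) * Real.exp (-(2*L+6)) := by
      have h1 := hA1 (s+1) le_rfl
      rw [show h + (s+1) = C+1 by omega] at h1
      refine h1.trans ?_
      apply mul_le_mul_of_nonneg_left _ (by positivity)
      apply Real.exp_le_exp.mpr
      push_cast
      rw [div_le_iff₀ (by positivity : (0:ℝ) < (n:ℝ)+1)]
      have hss : (2*L+6)*((n:ℝ)+1) ≤ ((s:ℝ)+1)*(((s:ℝ)+1)-1) := by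
        nlinarith only [hslb, hSsq, hSnn]
      nlinarith only [hss]
    rw [pmf_eq hCn, div_le_iff₀ (by positivity : (0:ℝ) < (2:ℝ)^n)]
    calc (n.choose (C+1):ℝ) ≤ (n.choose h : ℝ) * Real.exp (-(2*L+6)) := hA2
      _ ≤ 2^n * Real.exp (-(2*L+6)) :=
          mul_le_mul_of_nonneg_right hchooseh (Real.exp_nonneg _)
      _ = Real.exp (-(2*L+6)) * 2^n := by ring
  have hAtail : prGT n (1/2) C ≤ (n:ℝ) * binomPMF n (1/2) (C+1) := by
    unfold prGT
    have hbound : ∀ k ∈ Finset.Icc (C+1) n, binomPMF n (1/2) k ≤ binomPMF n (1/2) (C+1) := by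
      intro k hk
      rw [Finset.mem_Icc] at hk
      rw [pmf_eq hk.2, pmf_eq hCn]
      have hcc : n.choose k ≤ n.choose (C+1) := by
        have := choose_anti n (C+1) (by omega) (k - (C+1))
        rwa [show (C+1) + (k-(C+1)) = k by omega] at this
      have hccr : (n.choose k : ℝ) ≤ (n.choose (C+1) : ℝ) := by exact_mod_cast hcc
      exact div_le_div_of_nonneg_right hccr (by positivity)
    calc ∑ k ∈ Finset.Icc (C+1) n, binomPMF n (1/2) k
        ≤ (Finset.Icc (C+1) n).card • binomPMF n (1/2) (C+1) :=
          Finset.sum_le_card_nsmul _ _ _ hbound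
      _ = ((Finset.Icc (C+1) n).card : ℝ) * binomPMF n (1/2) (C+1) := nsmul_eq_mul _ _
      _ ≤ (n:ℝ) * binomPMF n (1/2) (C+1) := by
          apply mul_le_mul_of_nonneg_right _ (pmf_nonneg n _)
          rw [Nat.card_Icc]
          exact_mod_cast (by omega : n + 1 - (C+1) ≤ n)
  have hAt : prGT n (1/2) C ≤ t := by
    have hexpL : Real.exp L = (n:ℝ) := by rw [hLdef]; exact Real.exp_log hNpos
    have h0 : Real.exp (-(2*L+6)) * ((n:ℝ)*(n:ℝ)) = Real.exp (-6) := by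
      rw [← hexpL, ← Real.exp_add, ← Real.exp_add]
      congr 1
      ring
    refine hAtail.trans ?_
    have hstep : (n:ℝ) * binomPMF n (1/2) (C+1) ≤ (n:ℝ) * Real.exp (-(2*L+6)) :=
      mul_le_mul_of_nonneg_left hApmf hNpos.le
    refine hstep.trans ?_
    have heqq : (n:ℝ) * Real.exp (-(2*L+6)) = Real.exp (-6) / (n:ℝ) := by
      rw [eq_div_iff (ne_of_gt hNpos)]
      calc (n:ℝ) * Real.exp (-(2*L+6)) * n = Real.exp (-(2*L+6)) * ((n:ℝ)*n) := by ring
        _ = Real.exp (-6) := h0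
    rw [heqq, htdef, div_le_div_iff₀ hNpos (by positivity)]
    have he2 : Real.exp 1^2 ≤ 7.4 := by nlinarith only [hE2, hE1]
    have he2' : (7.3:ℝ) ≤ Real.exp 1^2 := by nlinarith only [hE1]
    have he4 : (53.2:ℝ) ≤ Real.exp 1^4 := by nlinarith only [he2', hE1]
    have h66 : Real.exp 6 = Real.exp 1^6 := by
      rw [show (6:ℝ) = 1+1+1+1+1+1 by norm_num, Real.exp_add, Real.exp_add, Real.exp_add,
        Real.exp_add, Real.exp_add]
      ring
    have he6 : (380:ℝ) ≤ Real.exp 6 := by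
      rw [h66]
      nlinarith only [he4, he2', hE1]
    have hexpneg : Real.exp (-6) * Real.exp 6 = 1 := by
      rw [← Real.exp_add]; norm_num
    have hepos : (0:ℝ) < Real.exp (-6) := Real.exp_pos _
    have h36 : 3 * Real.exp 1^2 * Real.sqrt 6 ≤ 56 := by
      nlinarith only [he2, hsq6ub, hsq6nn, he2']
    have hfin : Real.exp (-6) * (3*Real.exp 1^2*Real.sqrt 6) ≤ 1 := by
      nlinarith only [hexpneg, hepos.le, h36, he6,
        mul_le_mul_of_nonneg_left h36 hepos.le, mul_le_mul_of_nonneg_left he6 hepos.le]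
    nlinarith only [mul_le_mul_of_nonneg_right hfin hNpos.le]
  have hUC : Uhalf n ≤ C := by
    rw [hUT]
    apply Nat.sInf_le
    rw [hTdef]
    exact hAt
  -- Claim C : the ratio chain
  set U : ℕ := Uhalf n with hUdef
  clear_value U
  have hUn : U + m ≤ n := by omega
  have hsum : (m:ℝ) * binomPMF n (1/2) (U+m) ≤ t := by
    have hsub2 : Finset.Icc (U+1) (U+m) ⊆ Finset.Icc (U+1) n :=
      Finset.Icc_subset_Icc_right (by omega)
    have hterm : ∀ k ∈ Finset.Icc (U+1) (U+m),
        binomPMF n (1/2) (U+m) ≤ binomPMF n (1/2) k := by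
      intro k hk
      rw [Finset.mem_Icc] at hk
      rw [pmf_eq (by omega : k ≤ n), pmf_eq (by omega : U+m ≤ n)]
      have hcc : n.choose (U+m) ≤ n.choose k := by
        have := choose_anti n k (by omega) ((U+m) - k)
        rwa [show k + ((U+m)-k) = U+m by omega] at this
      have hccr : (n.choose (U+m) : ℝ) ≤ (n.choose k : ℝ) := by exact_mod_cast hcc
      exact div_le_div_of_nonneg_right hccr (by positivity)
    calc (m:ℝ) * binomPMF n (1/2) (U+m)
        = ((Finset.Icc (U+1) (U+m)).card : ℝ) * binomPMF n (1/2) (U+m) := by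
          rw [Nat.card_Icc, show U+m+1-(U+1) = m by omega]
      _ = (Finset.Icc (U+1) (U+m)).card • binomPMF n (1/2) (U+m) := (nsmul_eq_mul _ _).symm
      _ ≤ ∑ k ∈ Finset.Icc (U+1) (U+m), binomPMF n (1/2) k :=
          Finset.card_nsmul_le_sum _ _ _ hterm
      _ ≤ ∑ k ∈ Finset.Icc (U+1) n, binomPMF n (1/2) k :=
          Finset.sum_le_sum_of_subset_of_nonneg hsub2 (fun i _ _ => pmf_nonneg n i)
      _ = prGT n (1/2) U := rfl
      _ ≤ t := hUmem
  have hUCr : (U:ℝ) ≤ (h:ℝ) + (s:ℝ) := by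
    have h1 : ((U:ℕ):ℝ) ≤ ((C:ℕ):ℝ) := by exact_mod_cast hUC
    have h2 : ((C:ℕ):ℝ) = (h:ℝ)+(s:ℝ) := by rw [hCdef]; push_cast; ring
    linarith only [h1, h2.le, h2.ge]
  set r := Real.exp (4.2 * q / (n:ℝ)) with hrdef
  have hr0 : (0:ℝ) < r := Real.exp_pos _
  have hqn : q ≤ (n:ℝ)/160 := by linarith only [hqle, hNpos]
  have hdpos : (0:ℝ) < (n:ℝ)/2 - q := by linarith only [hqn, hN6]
  have hC1 : ∀ j : ℕ, j ≤ m → (n.choose U : ℝ) ≤ (n.choose (U+j) : ℝ) * r^j := by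
    intro j
    induction j with
    | zero => intro _; simp
    | succ j ih =>
      intro hj
      have hjm : j < m := by omega
      have ihj := ih (by omega)
      have key : (n.choose (U+j) : ℝ) ≤ (n.choose (U+j+1) : ℝ) * r := by
        have hkn : U + j + 1 ≤ n := by omega
        have hrec := choose_rec n (U+j) (by omega)
        push_cast at hrec
        have hden : (0:ℝ) < (n:ℝ) - ((U:ℝ)+(j:ℝ)) := by
          have hc : ((U+j+1 : ℕ):ℝ) ≤ (n:ℝ) := by exact_mod_cast hkn
          push_cast at hc
          linarith only [hc]
        have heq2 : (n.choose (U+j) : ℝ)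
            = (n.choose (U+j+1) : ℝ) * (((U:ℝ)+(j:ℝ)+1) / ((n:ℝ) - ((U:ℝ)+(j:ℝ)))) := by
          rw [mul_div_assoc', eq_div_iff (ne_of_gt hden)]
          linarith only [hrec]
        have hjm1 : (j:ℝ) + 1 ≤ (m:ℝ) := by
          have : ((j+1 : ℕ):ℝ) ≤ ((m:ℕ):ℝ) := by exact_mod_cast hjm
          push_cast at this
          linarith only [this]
        have hnum2 : (U:ℝ)+(j:ℝ)+1 ≤ (n:ℝ)/2 + q := by
          rw [hqdef]
          linarith only [hUCr, hhrub, hjm1]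
        have hden2 : (n:ℝ)/2 - q ≤ (n:ℝ) - ((U:ℝ)+(j:ℝ)) := by
          rw [hqdef]
          linarith only [hUCr, hhrub, hjm1]
        have hfac : ((U:ℝ)+(j:ℝ)+1) / ((n:ℝ) - ((U:ℝ)+(j:ℝ))) ≤ r := by
          have hU0 : (0:ℝ) ≤ (U:ℝ) := by positivity
          have hj0 : (0:ℝ) ≤ (j:ℝ) := by positivity
          have h1 : ((U:ℝ)+(j:ℝ)+1) / ((n:ℝ) - ((U:ℝ)+(j:ℝ)))
              ≤ ((n:ℝ)/2 + q)/((n:ℝ)/2 - q) :=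
            div_le_div₀ (by linarith only [hqnn, hNpos]) hnum2 hdpos hden2
          refine h1.trans ?_
          have h2 : ((n:ℝ)/2 + q)/((n:ℝ)/2 - q) ≤ 4.2*q/(n:ℝ) + 1 := by
            have expand : 4.2*q/(n:ℝ) + 1 = ((n:ℝ) + 4.2*q)/(n:ℝ) := by
              field_simp
              ring
            rw [expand, div_le_div_iff₀ hdpos hNpos]
            nlinarith only [mul_nonneg hqnn
              (show (0:ℝ) ≤ 0.1*(n:ℝ) - 4.2*q by linarith only [hqn, hNpos])]
          refine h2.trans ?_
          rw [hrdef]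
          exact Real.add_one_le_exp _
        calc (n.choose (U+j) : ℝ)
            = (n.choose (U+j+1) : ℝ) * (((U:ℝ)+(j:ℝ)+1) / ((n:ℝ) - ((U:ℝ)+(j:ℝ)))) := heq2
          _ ≤ (n.choose (U+j+1) : ℝ) * r := mul_le_mul_of_nonneg_left hfac (by positivity)
      refine ihj.trans ?_
      calc (n.choose (U+j):ℝ) * r^j ≤ ((n.choose (U+j+1):ℝ) * r) * r^j :=
            mul_le_mul_of_nonneg_right key (pow_nonneg hr0.le j)
        _ = (n.choose (U+(j+1)):ℝ) * r^(j+1) := by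
            rw [show U+(j+1) = U+j+1 by omega, pow_succ]
            ring
  have hqm : 4.2 * q * (m:ℝ) ≤ (n:ℝ) := by
    have hq1 : q*(m:ℝ) ≤ (S+B+2)*(B+1) := by
      apply mul_le_mul _ hmub (by positivity) (by linarith only [hSnn, hBpos])
      rw [hqdef]
      linarith only [hsub, hmub]
    have hB2 : B^2 ≤ 0.00127*(n:ℝ) := by
      rw [hBsq, div_le_iff₀ (by nlinarith only [hLlb] : (0:ℝ) < 64*L)]
      nlinarith only [mul_le_mul_of_nonneg_left hLlb hNpos.le]
    have h2n : (2:ℝ) ≤ 2e-6 * (n:ℝ) := by nlinarith only [hN6]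
    nlinarith only [hq1, hBSle, hSle, hB2, hBle, h2n, hN6]
  have hrm : r^m ≤ Real.exp 1 := by
    rw [hrdef, ← Real.exp_nat_mul]
    apply Real.exp_le_exp.mpr
    have heq3 : (m:ℝ)*(4.2*q/(n:ℝ)) = 4.2*q*(m:ℝ)/(n:ℝ) := by ring
    rw [heq3, div_le_one hNpos]
    exact hqm
  have hm0 : (0:ℝ) < (m:ℝ) := by exact_mod_cast hm1
  have hpmfU : binomPMF n (1/2) U ≤ Real.exp 1 * (t / m) := by
    have hUleqn : U ≤ n := by omega
    have h1 := hC1 m le_rfl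
    have h2 : (n.choose (U+m) : ℝ) * r^m ≤ (n.choose (U+m) : ℝ) * Real.exp 1 :=
      mul_le_mul_of_nonneg_left hrm (by positivity)
    have h3 : (n.choose U : ℝ) ≤ (n.choose (U+m) : ℝ) * Real.exp 1 := h1.trans h2
    have h4 : binomPMF n (1/2) (U+m) ≤ t / m := by
      rw [le_div_iff₀ hm0]
      linarith only [hsum]
    rw [pmf_eq hUleqn]
    calc (n.choose U : ℝ)/2^n ≤ ((n.choose (U+m):ℝ) * Real.exp 1)/2^n :=
          div_le_div_of_nonneg_right h3 (by positivity)
      _ = Real.exp 1 * ((n.choose (U+m):ℝ)/2^n) := by ring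
      _ = Real.exp 1 * binomPMF n (1/2) (U+m) := by rw [pmf_eq (by omega : U+m ≤ n)]
      _ ≤ Real.exp 1 * (t/m) := mul_le_mul_of_nonneg_left h4 (Real.exp_pos 1).le
  -- finish
  have hrpow : (n:ℝ)^((3:ℝ)/2) = (n:ℝ) * sqN := by
    rw [show (3:ℝ)/2 = 1 + 1/2 by norm_num, Real.rpow_add hNpos, Real.rpow_one, hsqNdef,
      Real.sqrt_eq_rpow]
  refine hpmfU.trans ?_
  rw [hrpow, htdef]
  have hE0 : (0:ℝ) < Real.exp 1 := Real.exp_pos 1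
  have hsq6pos : (0:ℝ) < Real.sqrt 6 := by linarith only [hsq6lb]
  have hmsq : sqN ≤ 8 * sqL * m := by
    have hh1 := hmlb
    rw [hBdef, div_le_iff₀ (by linarith only [hsqLlb] : (0:ℝ) < 8*sqL)] at hh1
    linarith only [hh1]
  have hLHS : Real.exp 1 * (1 / (3 * Real.exp 1 ^ 2 * (n : ℝ) * Real.sqrt 6)/(m:ℝ))
      = 1/(3*Real.exp 1*Real.sqrt 6*(n:ℝ)*(m:ℝ)) := by
    have hexp2 : Real.exp 2 = Real.exp 1^2 := by
      rw [show (2:ℝ) = 1+1 by norm_num, Real.exp_add]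
      ring
    field_simp
  have hRHS : 8/(3*Real.exp 1*Real.sqrt 6) * sqL / ((n:ℝ)*sqN)
      = (8*sqL)/(3*Real.exp 1*Real.sqrt 6*(n:ℝ)*sqN) := by
    field_simp
  rw [hLHS, hRHS, div_le_div_iff₀ (by positivity) (by positivity)]
  have hKpos : (0:ℝ) ≤ 3*Real.exp 1*Real.sqrt 6*(n:ℝ) := by positivity
  nlinarith only [mul_le_mul_of_nonneg_left hmsq hKpos]
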